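/- Fix n ≥ 2, let g₁,…,gₙ : ℂ → ℂ and f : ℂ → ℂ, and let L be an n×n real symmetric positive semidefinite matrix with L𝟙 = 0 for which there exists μ > 0 with x*Lx ≥ μ‖x‖² for every complex vector x orthogonal to 𝟙 (i.e. λ₂(L) > 0). Let s₀ ∈ ℂ and suppose: (i) |f(s)| → ∞ as s → s₀ through values s ≠ s₀ (s₀ is a pole of f); (ii) there exist δ, M₁, M₂ > 0 such that for all s with 0 < |s − s₀| ≤ δ one has |gᵢ(s)⁻¹| ≤ M₂ for all i, ∑ᵢ gᵢ(s)⁻¹ ≠ 0, and |ḡ(s)| ≤ M₁, where ḡ(s) := ((1/n)∑ᵢ gᵢ(s)⁻¹)⁻¹. Then ‖(diag(g₁(s)⁻¹,…,gₙ(s)⁻¹) + f(s)·L)⁻¹ − (1/n)ḡ(s)·𝟙𝟙ᵀ‖ → 0 as s → s₀ through values s ≠ s₀. -/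

import Mathlib

open Matrix Complex Filter Topology
open Finset

/-- Spectral norm (L2 operator norm) of a complex matrix. -/
noncomputable def specNorm {n : ℕ} (A : Matrix (Fin n) (Fin n) ℂ) : ℝ :=
  ‖Matrix.toEuclideanCLM (𝕜 := ℂ) A‖

/-- The all-ones matrix. -/
def allOnes (n : ℕ) : Matrix (Fin n) (Fin n) ℂ := Matrix.of fun _ _ => 1

noncomputable def en {n : ℕ} (x : Fin n → ℂ) : ℝ :=
  ‖(WithLp.equiv 2 (Fin n → ℂ)).symm x‖

lemma en_eq {n : ℕ} (x : Fin n → ℂ) : en x = Real.sqrt (∑ i, ‖x i‖ ^ 2) := by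
  rw [en, EuclideanSpace.norm_eq]
  simp [WithLp.equiv_symm_apply]

lemma en_nonneg {n : ℕ} (x : Fin n → ℂ) : 0 ≤ en x := norm_nonneg _

lemma en_sq {n : ℕ} (x : Fin n → ℂ) : en x ^ 2 = ∑ i, ‖x i‖ ^ 2 := by
  rw [en_eq, Real.sq_sqrt]
  positivity

lemma en_add_le {n : ℕ} (x y : Fin n → ℂ) : en (x + y) ≤ en x + en y := by
  rw [en, en, en, WithLp.equiv_symm_apply, WithLp.toLp_add]
  exact norm_add_le _ _

lemma en_eq_zero {n : ℕ} {x : Fin n → ℂ} (h : en x = 0) : x = 0 := by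
  have := norm_eq_zero.mp h
  have := congrArg (WithLp.equiv 2 (Fin n → ℂ)) this
  simpa using this

lemma en_le_of {n : ℕ} (x : Fin n → ℂ) (r : ℝ) (hr : 0 ≤ r) (h : ∀ i, ‖x i‖ ≤ r) :
    en x ≤ Real.sqrt n * r := by
  rw [en_eq]
  have h1 : ∑ i, ‖x i‖ ^ 2 ≤ (n : ℝ) * r ^ 2 := by
    calc ∑ i, ‖x i‖ ^ 2 ≤ ∑ _i : Fin n, r ^ 2 :=
          Finset.sum_le_sum fun i _ => pow_le_pow_left₀ (norm_nonneg _) (h i) 2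
      _ = (n : ℝ) * r ^ 2 := by simp [mul_comm]
  calc Real.sqrt (∑ i, ‖x i‖ ^ 2) ≤ Real.sqrt ((n : ℝ) * r ^ 2) := Real.sqrt_le_sqrt h1
    _ = Real.sqrt n * r := by
        rw [Real.sqrt_mul (Nat.cast_nonneg n), Real.sqrt_sq hr]

lemma sum_norm_le_en {n : ℕ} (x : Fin n → ℂ) : ∑ i, ‖x i‖ ≤ Real.sqrt n * en x := by
  have h := sq_sum_le_card_mul_sum_sq (s := Finset.univ) (f := fun i => ‖x i‖)
  simp only [Finset.card_univ, Fintype.card_fin] at h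
  have h2 : (∑ i, ‖x i‖) ^ 2 ≤ (Real.sqrt n * en x) ^ 2 := by
    rw [mul_pow, Real.sq_sqrt (Nat.cast_nonneg n), en_sq]
    exact_mod_cast h
  have hs : (0:ℝ) ≤ ∑ i, ‖x i‖ := Finset.sum_nonneg fun i _ => norm_nonneg _
  have ht : (0:ℝ) ≤ Real.sqrt n * en x := mul_nonneg (Real.sqrt_nonneg _) (en_nonneg x)
  nlinarith

lemma en_mulVec {n : ℕ} (A : Matrix (Fin n) (Fin n) ℂ) (x : Fin n → ℂ) :
    en (A.mulVec x) ≤ specNorm A * en x := by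
  have h := (Matrix.toEuclideanCLM (𝕜 := ℂ) A).le_opNorm ((WithLp.equiv 2 (Fin n → ℂ)).symm x)
  rwa [WithLp.equiv_symm_apply, Matrix.toEuclideanCLM_toLp] at h

lemma specNorm_le_of {n : ℕ} (A : Matrix (Fin n) (Fin n) ℂ) (K : ℝ) (hK : 0 ≤ K)
    (h : ∀ x, en (A.mulVec x) ≤ K * en x) : specNorm A ≤ K := by
  refine ContinuousLinearMap.opNorm_le_bound _ hK fun y => ?_
  have hy : y = (WithLp.equiv 2 (Fin n → ℂ)).symm (WithLp.equiv 2 (Fin n → ℂ) y) :=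
    (Equiv.symm_apply_apply _ _).symm
  rw [hy, WithLp.equiv_symm_apply, Matrix.toEuclideanCLM_toLp]
  exact h _

lemma dot_le_en {n : ℕ} (x y : Fin n → ℂ) : ‖star x ⬝ᵥ y‖ ≤ en x * en y := by
  have h := norm_inner_le_norm (𝕜 := ℂ) ((WithLp.equiv 2 (Fin n → ℂ)).symm x)
    ((WithLp.equiv 2 (Fin n → ℂ)).symm y)
  rw [PiLp.inner_apply] at h
  simpa [dotProduct, RCLike.inner_apply, WithLp.equiv_symm_apply, en, mul_comm] using h

set_option maxHeartbeats 1000000 in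
lemma key {n : ℕ} (hn : 2 ≤ n) (L : Matrix (Fin n) (Fin n) ℝ) (hL : L.PosSemidef)
    (hL1 : L.mulVec (fun _ => 1) = 0) (μ M₁ M₂ : ℝ) (hμ : 0 < μ) (hM₁ : 0 < M₁) (hM₂ : 0 < M₂)
    (hgap : ∀ x : Fin n → ℂ, (∑ i, x i = 0) →
      μ * ∑ i, ‖x i‖ ^ 2 ≤ (star x ⬝ᵥ (L.map (Complex.ofReal)).mulVec x).re)
    (d : Fin n → ℂ) (c : ℂ)
    (hd : ∀ i, ‖d i‖ ≤ M₂) (hS : (∑ i, d i) ≠ 0)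
    (hgb : ‖((n:ℂ)⁻¹ * ∑ i, d i)⁻¹‖ ≤ M₁)
    (hc : M₂ < μ / (1+M₁*M₂)^2 * ‖c‖) :
    specNorm ((Matrix.diagonal d + c • L.map Complex.ofReal)⁻¹
        - ((n : ℂ)⁻¹ * ((n : ℂ)⁻¹ * ∑ i, d i)⁻¹) • allOnes n)
      ≤ (1+M₁*M₂) / (μ / (1+M₁*M₂)^2 * ‖c‖ - M₂) := by
  have hn0 : (0:ℝ) < n := by positivity
  have hnC : (n:ℂ) ≠ 0 := Nat.cast_ne_zero.mpr (by omega)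
  set sn : ℝ := Real.sqrt n with hsn_def
  have hsn : sn ^ 2 = n := Real.sq_sqrt (le_of_lt hn0)
  have hsn0 : 0 < sn := Real.sqrt_pos.mpr hn0
  set L' := L.map Complex.ofReal with hL'def
  set D := Matrix.diagonal d with hDdef
  set A := D + c • L' with hAdef
  set S := ∑ i, d i with hSdef
  set gb := ((n:ℂ)⁻¹ * S)⁻¹ with hgbdef
  set C : ℝ := 1 + M₁ * M₂ with hCdef
  set κ : ℝ := μ / C ^ 2 with hκdef
  have hC0 : 0 < C := by positivity
  have hκ0 : 0 < κ := by positivity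
  have hpos : 0 < κ * ‖c‖ - M₂ := by linarith [hc]
  -- L facts
  have hsym : ∀ i j, L i j = L j i := by
    intro i j
    have := congrFun (congrFun hL.1 j) i
    simpa [Matrix.conjTranspose_apply] using this
  have hrow : ∀ i, ∑ j, L i j = 0 := by
    intro i
    have := congrFun hL1 i
    simpa [Matrix.mulVec, dotProduct] using this
  have hcol : ∀ j, ∑ i, L i j = 0 := by
    intro j
    calc ∑ i, L i j = ∑ i, L j i := Finset.sum_congr rfl (fun i _ => hsym i j)
      _ = 0 := hrow j
  have hLsum : ∀ v : Fin n → ℂ, ∑ i, (L'.mulVec v) i = 0 := by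
    intro v
    simp only [hL'def, Matrix.mulVec, dotProduct, Matrix.map_apply]
    rw [Finset.sum_comm]
    have h0 : ∀ j, ∑ i, (L i j : ℂ) * v j = 0 := by
      intro j
      rw [← Finset.sum_mul]
      have : ((∑ i, L i j : ℝ) : ℂ) = 0 := by rw [hcol j]; simp
      push_cast at this
      rw [this, zero_mul]
    simp [h0]
  have hLconst : ∀ m : ℂ, L'.mulVec (fun _ => m) = 0 := by
    intro m
    funext i
    simp only [hL'def, Matrix.mulVec, dotProduct, Matrix.map_apply, Pi.zero_apply]
    rw [← Finset.sum_mul]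
    have : ((∑ j, L i j : ℝ) : ℂ) = 0 := by rw [hrow i]; simp
    push_cast at this
    rw [this, zero_mul]
  -- norm of S from below
  have hnS : ((n:ℂ)⁻¹ * S) ≠ 0 := mul_ne_zero (inv_ne_zero hnC) hS
  have hgbS : gb * ((n:ℂ)⁻¹ * S) = 1 := inv_mul_cancel₀ hnS
  have hSnorm : (n:ℝ) ≤ ‖S‖ * M₁ := by
    have h1 : ‖(n:ℂ)⁻¹ * S‖⁻¹ ≤ M₁ := by
      rw [← norm_inv]; exact hgb
    have h2 : 0 < ‖(n:ℂ)⁻¹ * S‖ := norm_pos_iff.mpr hnS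
    have h3 : 1 / M₁ ≤ ‖(n:ℂ)⁻¹ * S‖ := (one_div_le h2 hM₁).mp (by
      rw [one_div]; exact h1)
    have h4 : ‖(n:ℂ)⁻¹ * S‖ = ‖S‖ / n := by
      rw [norm_mul, norm_inv]
      simp [div_eq_inv_mul]
    rw [h4, div_le_div_iff₀ hM₁ hn0, one_mul] at h3
    linarith
  -- coercivity
  have coercive : ∀ x : Fin n → ℂ, (∑ i, d i * x i = 0) →
      (κ * ‖c‖ - M₂) * en x ≤ en (A.mulVec x) := by
    intro x hx
    set m := (n:ℂ)⁻¹ * ∑ i, x i with hmdef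
    set q : Fin n → ℂ := fun i => x i - m with hqdef
    have hq : ∑ i, q i = 0 := by
      simp only [hqdef, Finset.sum_sub_distrib, Finset.sum_const, Finset.card_univ,
        Fintype.card_fin, nsmul_eq_mul, hmdef]
      field_simp
      ring
    have hxq : x = q + (fun _ => m) := by funext i; simp [hqdef]
    have hEgap := hgap q hq
    -- bound on m
    have hdq : m * S = -(∑ i, d i * q i) := by
      have h1 : ∑ i, d i * q i = (∑ i, d i * x i) - m * S := by
        simp only [hqdef, mul_sub, Finset.sum_sub_distrib, hSdef]
        rw [← Finset.sum_mul]
        ring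
      rw [h1, hx]; ring
    have hmS : ‖m‖ * ‖S‖ ≤ M₂ * (sn * en q) := by
      rw [← norm_mul, hdq, norm_neg]
      calc ‖∑ i, d i * q i‖ ≤ ∑ i, ‖d i * q i‖ := norm_sum_le _ _
        _ ≤ ∑ i, M₂ * ‖q i‖ := by
            refine Finset.sum_le_sum fun i _ => ?_
            rw [norm_mul]
            exact mul_le_mul_of_nonneg_right (hd i) (norm_nonneg _)
        _ = M₂ * ∑ i, ‖q i‖ := by rw [Finset.mul_sum]
        _ ≤ M₂ * (sn * en q) := by
            exact mul_le_mul_of_nonneg_left (sum_norm_le_en q) (le_of_lt hM₂)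
    have hm : sn * ‖m‖ ≤ M₁ * M₂ * en q := by
      nlinarith [mul_le_mul_of_nonneg_left hmS (le_of_lt hM₁),
        mul_le_mul_of_nonneg_left hSnorm (norm_nonneg m), hsn, hsn0, en_nonneg q,
        norm_nonneg m, norm_nonneg S]
    -- en x ≤ C * en q
    have hxle : en x ≤ C * en q := by
      have hconst : en (fun _ : Fin n => m) ≤ sn * ‖m‖ :=
        en_le_of _ ‖m‖ (norm_nonneg m) (fun i => le_refl _)
      calc en x = en (q + fun _ => m) := by rw [← hxq]
        _ ≤ en q + en (fun _ : Fin n => m) := en_add_le _ _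
        _ ≤ en q + sn * ‖m‖ := by linarith
        _ ≤ en q + M₁ * M₂ * en q := by linarith
        _ = C * en q := by rw [hCdef]; ring
    -- inner product decomposition
    have hAx : A.mulVec x = D.mulVec x + c • L'.mulVec x := by
      rw [hAdef, Matrix.add_mulVec, Matrix.smul_mulVec]
    have hLxq : L'.mulVec x = L'.mulVec q := by
      rw [hxq, Matrix.mulVec_add, hLconst m, add_zero]
    set ρ := star q ⬝ᵥ L'.mulVec q with hρdef
    have hsx : star x ⬝ᵥ L'.mulVec x = ρ := by
      rw [hLxq, hxq]
      have : star (q + fun _ : Fin n => m) = star q + star (fun _ : Fin n => m) :=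
        star_add _ _
      rw [this, add_dotProduct, hρdef]
      have h0 : star (fun _ : Fin n => m) ⬝ᵥ L'.mulVec q = 0 := by
        simp only [dotProduct, Pi.star_apply]
        rw [← Finset.mul_sum, hLsum q, mul_zero]
      rw [h0, add_zero]
    have hdiag : star x ⬝ᵥ D.mulVec x = ∑ i, (starRingEnd ℂ) (x i) * (d i * x i) := by
      simp [hDdef, dotProduct, Matrix.mulVec_diagonal]
    have hip : star x ⬝ᵥ A.mulVec x = (∑ i, (starRingEnd ℂ) (x i) * (d i * x i)) + c * ρ := by
      rw [hAx, dotProduct_add, hdiag, dotProduct_smul, hsx, smul_eq_mul]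
    -- bounds
    have hρre : μ * ∑ i, ‖q i‖ ^ 2 ≤ ρ.re := hEgap
    have hq2 : (0:ℝ) ≤ ∑ i, ‖q i‖ ^ 2 := Finset.sum_nonneg fun i _ => by positivity
    have hcρ : ‖c‖ * (μ * ∑ i, ‖q i‖ ^ 2) ≤ ‖c * ρ‖ := by
      rw [norm_mul]
      have h1 : ρ.re ≤ ‖ρ‖ := Complex.re_le_norm ρ
      have h2 : μ * ∑ i, ‖q i‖ ^ 2 ≤ ‖ρ‖ := le_trans hρre h1
      exact mul_le_mul_of_nonneg_left h2 (norm_nonneg c)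
    have hdiagbd : ‖∑ i, (starRingEnd ℂ) (x i) * (d i * x i)‖ ≤ M₂ * en x ^ 2 := by
      calc ‖∑ i, (starRingEnd ℂ) (x i) * (d i * x i)‖
          ≤ ∑ i, ‖(starRingEnd ℂ) (x i) * (d i * x i)‖ := norm_sum_le _ _
        _ ≤ ∑ i, M₂ * ‖x i‖ ^ 2 := by
            refine Finset.sum_le_sum fun i _ => ?_
            rw [norm_mul, norm_mul, RingHomIsometric.norm_map]
            calc ‖x i‖ * (‖d i‖ * ‖x i‖) ≤ ‖x i‖ * (M₂ * ‖x i‖) := by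
                  apply mul_le_mul_of_nonneg_left _ (norm_nonneg _)
                  exact mul_le_mul_of_nonneg_right (hd i) (norm_nonneg _)
              _ = M₂ * ‖x i‖ ^ 2 := by ring
        _ = M₂ * en x ^ 2 := by rw [en_sq, Finset.mul_sum]
    have hCS : ‖star x ⬝ᵥ A.mulVec x‖ ≤ en x * en (A.mulVec x) := dot_le_en _ _
    have hlow : ‖c‖ * (μ * ∑ i, ‖q i‖ ^ 2) - M₂ * en x ^ 2 ≤ en x * en (A.mulVec x) := by
      have h1 : ‖c * ρ‖ ≤ ‖star x ⬝ᵥ A.mulVec x‖ + ‖∑ i, (starRingEnd ℂ) (x i) * (d i * x i)‖ := by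
        have : c * ρ = (star x ⬝ᵥ A.mulVec x) - ∑ i, (starRingEnd ℂ) (x i) * (d i * x i) := by
          rw [hip]; ring
        rw [this]
        exact norm_sub_le _ _
      linarith
    -- combine with en x ≤ C en q
    have hq_ge : en x ^ 2 ≤ C ^ 2 * ∑ i, ‖q i‖ ^ 2 := by
      rw [← en_sq]
      nlinarith [en_nonneg x, en_nonneg q, hxle, hC0]
    have hfinal : (κ * ‖c‖ - M₂) * en x ^ 2 ≤ en x * en (A.mulVec x) := by
      have h2 : κ * ‖c‖ * en x ^ 2 ≤ ‖c‖ * (μ * ∑ i, ‖q i‖ ^ 2) := by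
        rw [hκdef]
        rw [div_mul_eq_mul_div, div_mul_eq_mul_div, div_le_iff₀ (by positivity : (0:ℝ) < C ^ 2)]
        nlinarith [mul_le_mul_of_nonneg_left hq_ge (mul_nonneg hμ.le (norm_nonneg c))]
      nlinarith [hlow]
    rcases eq_or_lt_of_le (en_nonneg x) with h0 | h0
    · rw [← h0, mul_zero]
      exact en_nonneg _
    · nlinarith [hfinal, h0]
  -- sum of entries of A.mulVec v equals ∑ d i * v i
  have hsumA : ∀ v : Fin n → ℂ, ∑ i, (A.mulVec v) i = ∑ i, d i * v i := by
    intro v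
    have hAv : A.mulVec v = D.mulVec v + c • L'.mulVec v := by
      rw [hAdef, Matrix.add_mulVec, Matrix.smul_mulVec]
    rw [hAv]
    simp only [Pi.add_apply, Pi.smul_apply, smul_eq_mul, Finset.sum_add_distrib]
    rw [← Finset.mul_sum, hLsum v, mul_zero, add_zero]
    simp [hDdef, Matrix.mulVec_diagonal]
  -- invertibility
  have hdet : IsUnit A.det := by
    rw [isUnit_iff_ne_zero]
    intro hdet0
    obtain ⟨v, hv0, hAv⟩ := Matrix.exists_mulVec_eq_zero_iff.mpr hdet0
    have hsum : ∑ i, d i * v i = 0 := by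
      rw [← hsumA v, hAv]
      simp
    have := coercive v hsum
    rw [hAv] at this
    have hen0 : en (0 : Fin n → ℂ) = 0 := by
      rw [en_eq]; simp
    rw [hen0] at this
    have : en v ≤ 0 := by nlinarith [hpos, en_nonneg v]
    exact hv0 (en_eq_zero (le_antisymm this (en_nonneg v)))
  -- matrix identity
  set P : Matrix (Fin n) (Fin n) ℂ := (n:ℂ)⁻¹ • allOnes n with hPdef
  set N : Matrix (Fin n) (Fin n) ℂ := 1 - gb • (D * P) with hNdef
  have hLones : L' * allOnes n = 0 := by
    ext i j
    simp only [Matrix.mul_apply, allOnes, Matrix.map_apply, Matrix.of_apply, mul_one,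
      Matrix.zero_apply, hL'def]
    have : ((∑ k, L i k : ℝ) : ℂ) = 0 := by rw [hrow i]; simp
    push_cast at this
    exact this
  have hAP : A * (gb • P) = gb • (D * P) := by
    simp only [hAdef, hPdef, Matrix.mul_smul, Matrix.add_mul, Matrix.smul_mul, hLones,
      smul_zero, add_zero]
  have hid : A⁻¹ - ((n:ℂ)⁻¹ * gb) • allOnes n = A⁻¹ * N := by
    have h1 : ((n:ℂ)⁻¹ * gb) • allOnes n = gb • P := by
      rw [hPdef, smul_smul, mul_comm]
    rw [h1, hNdef, ← hAP, Matrix.mul_sub, Matrix.mul_one, ← Matrix.mul_assoc,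
      Matrix.nonsing_inv_mul A hdet, Matrix.one_mul]
  -- mulVec formula for N
  have hNmv : ∀ z : Fin n → ℂ, N.mulVec z =
      fun i => z i - (gb * ((n:ℂ)⁻¹ * ∑ j, z j)) * d i := by
    intro z
    funext i
    rw [hNdef, Matrix.sub_mulVec]
    simp only [Matrix.one_mulVec, Pi.sub_apply]
    congr 1
    rw [Matrix.smul_mulVec, ← Matrix.mulVec_mulVec]
    have hPz : P.mulVec z = fun _ => (n:ℂ)⁻¹ * ∑ j, z j := by
      funext k
      simp [hPdef, Matrix.smul_mulVec, Matrix.mulVec, dotProduct, allOnes,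
        Finset.mul_sum]
    rw [hPz]
    simp [hDdef, Matrix.mulVec_diagonal]
    ring
  -- sum of entries of N.mulVec z is zero
  have hNsum : ∀ z : Fin n → ℂ, ∑ i, (N.mulVec z) i = 0 := by
    intro z
    rw [hNmv z]
    rw [Finset.sum_sub_distrib, ← Finset.mul_sum, ← hSdef]
    have : gb * ((n:ℂ)⁻¹ * ∑ j, z j) * S = (gb * ((n:ℂ)⁻¹ * S)) * ∑ j, z j := by ring
    rw [this, hgbS, one_mul, sub_self]
  -- norm bound for N.mulVec
  have hNbd : ∀ z : Fin n → ℂ, en (N.mulVec z) ≤ C * en z := by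
    intro z
    set w := gb * ((n:ℂ)⁻¹ * ∑ j, z j) with hwdef
    have hsplit : N.mulVec z = z + fun i => -(w * d i) := by
      rw [hNmv z]; funext i; simp [hwdef]; ring
    have hw : ‖w‖ * sn ≤ M₁ * en z := by
      have h1 : ‖w‖ ≤ M₁ * (‖(n:ℂ)⁻¹‖ * ‖∑ j, z j‖) := by
        rw [hwdef, norm_mul, norm_mul]
        exact mul_le_mul_of_nonneg_right hgb (by positivity)
      have h2 : ‖∑ j, z j‖ ≤ ∑ j, ‖z j‖ := norm_sum_le _ _
      have h3 : ∑ j, ‖z j‖ ≤ sn * en z := sum_norm_le_en z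
      have h4 : ‖(n:ℂ)⁻¹‖ = (n:ℝ)⁻¹ := by
        rw [norm_inv]; simp
      rw [h4] at h1
      have h5 : ‖w‖ ≤ M₁ * ((n:ℝ)⁻¹ * (sn * en z)) := by
        calc ‖w‖ ≤ M₁ * ((n:ℝ)⁻¹ * ‖∑ j, z j‖) := h1
          _ ≤ M₁ * ((n:ℝ)⁻¹ * (sn * en z)) := by gcongr; linarith
      have hn_inv : (n:ℝ)⁻¹ * sn * sn = 1 := by
        rw [mul_assoc, ← sq, hsn]
        field_simp
      have h5' := mul_le_mul_of_nonneg_right h5 hsn0.le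
      have heq : M₁ * ((n:ℝ)⁻¹ * (sn * en z)) * sn = M₁ * en z * ((n:ℝ)⁻¹ * sn * sn) := by ring
      rw [heq, hn_inv, mul_one] at h5'
      exact h5'
    have htail : en (fun i => -(w * d i)) ≤ sn * (‖w‖ * M₂) := by
      apply en_le_of _ _ (by positivity)
      intro i
      rw [norm_neg, norm_mul]
      exact mul_le_mul_of_nonneg_left (hd i) (norm_nonneg _)
    calc en (N.mulVec z) = en (z + fun i => -(w * d i)) := by rw [hsplit]
      _ ≤ en z + en (fun i => -(w * d i)) := en_add_le _ _
      _ ≤ en z + sn * (‖w‖ * M₂) := by linarith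
      _ ≤ en z + M₁ * M₂ * en z := by nlinarith [hw, hM₂, hsn0, norm_nonneg w]
      _ = C * en z := by rw [hCdef]; ring
  -- final bound
  rw [hid]
  apply specNorm_le_of _ _ (by positivity)
  intro z
  set x := (A⁻¹ * N).mulVec z with hxdef
  have hAx : A.mulVec x = N.mulVec z := by
    rw [hxdef, Matrix.mulVec_mulVec, ← Matrix.mul_assoc, Matrix.mul_nonsing_inv A hdet,
      Matrix.one_mul]
  have hsum : ∑ i, d i * x i = 0 := by
    rw [← hsumA x, hAx, hNsum z]
  have h1 := coercive x hsum
  rw [hAx] at h1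
  have h2 := hNbd z
  rw [div_mul_eq_mul_div, le_div_iff₀ hpos, mul_comm (en x)]
  calc (κ * ‖c‖ - M₂) * en x ≤ en (N.mulVec z) := h1
    _ ≤ C * en z := h2

/-- Theorem 3 of the paper, coherence under high gain in coupling dynamics. -/
theorem stmt_2 {n : ℕ} (hn : 2 ≤ n) (g : Fin n → ℂ → ℂ) (f : ℂ → ℂ)
    (L : Matrix (Fin n) (Fin n) ℝ) (hL : L.PosSemidef)
    (hL1 : L.mulVec (fun _ => 1) = 0)
    (μ : ℝ) (hμ : 0 < μ)
    (hgap : ∀ x : Fin n → ℂ, (∑ i, x i = 0) →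
      μ * ∑ i, ‖x i‖ ^ 2 ≤ (star x ⬝ᵥ (L.map (Complex.ofReal)).mulVec x).re)
    (s₀ : ℂ)
    (hf : Tendsto (fun s => ‖f s‖) (𝓝[≠] s₀) atTop)
    (hbd : ∃ δ > 0, ∃ M₁ > 0, ∃ M₂ > 0, ∀ s : ℂ, 0 < ‖s - s₀‖ → ‖s - s₀‖ ≤ δ →
      (∀ i, ‖(g i s)⁻¹‖ ≤ M₂) ∧ (∑ i, (g i s)⁻¹ ≠ 0) ∧
        ‖((n : ℂ)⁻¹ * ∑ i, (g i s)⁻¹)⁻¹‖ ≤ M₁) :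
    Tendsto (fun s =>
        specNorm ((Matrix.diagonal (fun i => (g i s)⁻¹) + f s • L.map (Complex.ofReal))⁻¹
          - ((n : ℂ)⁻¹ * ((n : ℂ)⁻¹ * ∑ i, (g i s)⁻¹)⁻¹) • allOnes n))
      (𝓝[≠] s₀) (𝓝 0) := by
  obtain ⟨δ, hδ, M₁, hM₁, M₂, hM₂, hb⟩ := hbd
  set κ : ℝ := μ / (1 + M₁ * M₂) ^ 2 with hκdef
  have hκ0 : 0 < κ := by positivity
  -- the dominating function tends to 0
  have hdom : Tendsto (fun s => (1 + M₁ * M₂) / (κ * ‖f s‖ - M₂)) (𝓝[≠] s₀) (𝓝 0) := by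
    apply Tendsto.div_atTop (tendsto_const_nhds)
    have h1 : Tendsto (fun s => κ * ‖f s‖) (𝓝[≠] s₀) atTop := by
      exact Tendsto.const_mul_atTop hκ0 hf
    have := tendsto_atTop_add_const_right (𝓝[≠] s₀) (-M₂) h1
    simpa [sub_eq_add_neg] using this
  apply squeeze_zero' (Filter.Eventually.of_forall (fun s => norm_nonneg _)) _ hdom
  have ev1 : ∀ᶠ s in 𝓝[≠] s₀, dist s s₀ ≤ δ :=
    Filter.Eventually.filter_mono nhdsWithin_le_nhds
      (Metric.eventually_nhds_iff.mpr ⟨δ, hδ, fun x hx => hx.le⟩)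
  have ev2 : ∀ᶠ s in 𝓝[≠] s₀, s ≠ s₀ := eventually_mem_nhdsWithin
  have ev3 : ∀ᶠ s in 𝓝[≠] s₀, (M₂ + 1) / κ ≤ ‖f s‖ := hf.eventually_ge_atTop _
  filter_upwards [ev1, ev2, ev3] with s h1 h2 h3
  have hpos : 0 < ‖s - s₀‖ := by
    rw [norm_pos_iff]
    exact sub_ne_zero.mpr h2
  have hdist : ‖s - s₀‖ ≤ δ := by rwa [Complex.dist_eq] at h1
  obtain ⟨hgM2, hSne, hgbM1⟩ := hb s hpos hdist
  have hc : M₂ < κ * ‖f s‖ := by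
    have h4 : M₂ + 1 ≤ κ * ‖f s‖ := by
      rw [div_le_iff₀ hκ0] at h3
      linarith [h3]
    linarith
  have h5 : M₂ + 1 ≤ κ * ‖f s‖ := by
    rw [div_le_iff₀ hκ0] at h3; linarith
  exact key hn L hL hL1 μ M₁ M₂ hμ hM₁ hM₂ hgap (fun i => (g i s)⁻¹) (f s) hgM2 hSne hgbM1 hc
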